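/- If g is an even continuous integrable probability density, then the boundary value of G at the origin is G(0⁺) := lim_{λ→0⁺} ∫ g(η)/(λ - iη) dη = π g(0), a real number; consequently, if g(0) > 0, then z = 0 solves the characteristic equation G(z) = 2/(Kμ) exactly when K μ = 2/(π g(0)). -/

import Mathlib

open MeasureTheory Complex Set Filter

-- Step 1: the real Poisson-kernel limit
lemma poisson_real_tendsto (g : ℝ → ℝ) (hg_cont : Continuous g)
    (hg_int : Integrable g) :
    Tendsto (fun lam : ℝ => ∫ η : ℝ, g η * (lam / (lam ^ 2 + η ^ 2)))
      (nhdsWithin 0 (Ioi 0)) (nhds (Real.pi * g 0)) := by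
  set φ : ℝ → ℝ := fun x => Real.pi⁻¹ * (1 + x ^ 2)⁻¹ with hφdef
  have hφ : ∀ x, 0 ≤ φ x := fun x => by positivity
  have h'φ : ∫ x, φ x = 1 := by
    rw [integral_const_mul, integral_univ_inv_one_add_sq,
      inv_mul_cancel₀ Real.pi_ne_zero]
  have hdecay : Tendsto (fun x : ℝ => ‖x‖ ^ (Module.finrank ℝ ℝ) * φ x)
      (Bornology.cobounded ℝ) (nhds 0) := by
    have hb : ∀ x : ℝ, ‖x‖ ^ (Module.finrank ℝ ℝ) * φ x ≤ Real.pi⁻¹ * |x|⁻¹ := by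
      intro x
      rcases eq_or_ne x 0 with rfl | hx
      · simp [φ]
      · have h1 : (0:ℝ) < 1 + x ^ 2 := by positivity
        have hax : (0:ℝ) < |x| := abs_pos.2 hx
        have key : |x| * (1 + x ^ 2)⁻¹ ≤ |x|⁻¹ := by
          rw [inv_eq_one_div, inv_eq_one_div, mul_one_div, div_le_div_iff₀ h1 hax]
          nlinarith [_root_.sq_abs x]
        rw [Module.finrank_self, pow_one, Real.norm_eq_abs, hφdef]
        calc |x| * (Real.pi⁻¹ * (1 + x ^ 2)⁻¹)
            = Real.pi⁻¹ * (|x| * (1 + x ^ 2)⁻¹) := by ring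
          _ ≤ Real.pi⁻¹ * |x|⁻¹ := by
              gcongr
    have htop : Tendsto (fun x : ℝ => Real.pi⁻¹ * |x|⁻¹)
        (Bornology.cobounded ℝ) (nhds 0) := by
      have h1 : Tendsto (fun x : ℝ => |x⁻¹|) (Bornology.cobounded ℝ) (nhds 0) := by
        simpa using (tendsto_inv₀_cobounded (α := ℝ)).abs
      have h2 : Tendsto (fun x : ℝ => Real.pi⁻¹ * |x⁻¹|)
          (Bornology.cobounded ℝ) (nhds 0) := by
        simpa using h1.const_mul Real.pi⁻¹
      refine h2.congr fun x => by rw [abs_inv]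
    exact squeeze_zero (fun x => by positivity) hb htop
  have key := tendsto_integral_comp_smul_smul_of_integrable (μ := volume)
    hφ h'φ hdecay hg_int hg_cont.continuousAt
  have key2 : Tendsto (fun lam : ℝ =>
      Real.pi * ∫ x, ((lam⁻¹) ^ (Module.finrank ℝ ℝ) * φ (lam⁻¹ • x)) • g x)
      (nhdsWithin 0 (Ioi 0)) (nhds (Real.pi * g 0)) :=
    (key.comp tendsto_inv_nhdsGT_zero).const_mul Real.pi
  refine key2.congr' ?_
  filter_upwards [self_mem_nhdsWithin] with lam hlam
  have hlam0 : (0:ℝ) < lam := hlam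
  rw [← integral_const_mul]
  refine integral_congr_ae (Filter.Eventually.of_forall fun x => ?_)
  have h2 : lam ^ 2 + x ^ 2 ≠ 0 := by positivity
  simp only [hφdef, Module.finrank_self, pow_one, smul_eq_mul]
  field_simp

lemma complex_integral_eq (g : ℝ → ℝ) (hg_cont : Continuous g) (hg_int : Integrable g)
    (hg_even : ∀ η, g (-η) = g η) (lam : ℝ) (hlam0 : 0 < lam) :
    ((∫ η : ℝ, g η * (lam / (lam ^ 2 + η ^ 2)) : ℝ) : ℂ)
      = ∫ η : ℝ, (g η : ℂ) / ((lam : ℂ) - Complex.I * η) := by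
  have hcont1 : Continuous (fun η : ℝ => lam / (lam ^ 2 + η ^ 2)) := by
    refine continuous_const.div (by fun_prop) fun η => by positivity
  have hcont2 : Continuous (fun η : ℝ => η / (lam ^ 2 + η ^ 2)) := by
    refine continuous_id.div (by fun_prop) fun η => by positivity
  have hmul : lam * lam⁻¹ = 1 := mul_inv_cancel₀ hlam0.ne'
  have hb1 : ∀ η : ℝ, |lam / (lam ^ 2 + η ^ 2)| ≤ lam⁻¹ := by
    intro η
    rw [_root_.abs_of_nonneg (by positivity), div_le_iff₀ (by positivity)]
    nlinarith [sq_nonneg η, inv_pos.2 hlam0, mul_nonneg (inv_pos.2 hlam0).le (sq_nonneg η)]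
  have hb2 : ∀ η : ℝ, |η / (lam ^ 2 + η ^ 2)| ≤ (2 * lam)⁻¹ := by
    intro η
    have hmul2 : (2 * lam) * (2 * lam)⁻¹ = 1 := mul_inv_cancel₀ (by positivity)
    rw [_root_.abs_div, _root_.abs_of_nonneg (by positivity : (0:ℝ) ≤ lam ^ 2 + η ^ 2),
      div_le_iff₀ (by positivity)]
    nlinarith [sq_nonneg (lam - |η|), _root_.sq_abs η, abs_nonneg η,
      inv_pos.2 (by positivity : (0:ℝ) < 2 * lam)]
  have hint1 : Integrable (fun η : ℝ => g η * (lam / (lam ^ 2 + η ^ 2))) := by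
    have := hg_int.bdd_mul hcont1.aestronglyMeasurable
      (c := lam⁻¹) (Filter.Eventually.of_forall fun x => by rw [Real.norm_eq_abs]; exact hb1 x)
    exact this.congr (Filter.Eventually.of_forall fun x => mul_comm _ _)
  have hint2 : Integrable (fun η : ℝ => g η * (η / (lam ^ 2 + η ^ 2))) := by
    have := hg_int.bdd_mul hcont2.aestronglyMeasurable
      (c := (2*lam)⁻¹) (Filter.Eventually.of_forall fun x => by rw [Real.norm_eq_abs]; exact hb2 x)
    exact this.congr (Filter.Eventually.of_forall fun x => mul_comm _ _)
  have hodd : ∫ η : ℝ, g η * (η / (lam ^ 2 + η ^ 2)) = 0 := by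
    have h := integral_neg_eq_self (fun η : ℝ => g η * (η / (lam ^ 2 + η ^ 2))) volume
    have heq : ∀ x : ℝ, g (-x) * ((-x) / (lam ^ 2 + (-x) ^ 2))
        = -(g x * (x / (lam ^ 2 + x ^ 2))) := by
      intro x; rw [hg_even, neg_sq]; ring
    simp only [heq, integral_neg] at h
    linarith
  have hpt : ∀ η : ℝ, (g η : ℂ) / ((lam : ℂ) - Complex.I * η)
      = ((g η * (lam / (lam ^ 2 + η ^ 2)) : ℝ) : ℂ)
        + ((g η * (η / (lam ^ 2 + η ^ 2)) : ℝ) : ℂ) * Complex.I := by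
    intro η
    have hne : ((lam : ℂ) - Complex.I * η) ≠ 0 := by
      intro hc
      have := congrArg Complex.re hc
      simp [Complex.mul_re] at this
      exact hlam0.ne' this
    have h2 : ((lam : ℂ) ^ 2 + (η : ℂ) ^ 2) ≠ 0 := by
      have : (lam:ℝ) ^ 2 + η ^ 2 ≠ 0 := by positivity
      exact_mod_cast this
    rw [div_eq_iff hne]
    push_cast
    field_simp
    ring_nf
    rw [Complex.I_sq]
    ring
  have hre : ∫ η : ℝ, ((g η * (lam / (lam ^ 2 + η ^ 2)) : ℝ) : ℂ)
      = ((∫ η : ℝ, g η * (lam / (lam ^ 2 + η ^ 2)) : ℝ) : ℂ) := integral_ofReal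
  have him : ∫ η : ℝ, ((g η * (η / (lam ^ 2 + η ^ 2)) : ℝ) : ℂ)
      = ((∫ η : ℝ, g η * (η / (lam ^ 2 + η ^ 2)) : ℝ) : ℂ) := integral_ofReal
  symm
  calc ∫ η : ℝ, (g η : ℂ) / ((lam : ℂ) - Complex.I * η)
      = ∫ η : ℝ, (((g η * (lam / (lam ^ 2 + η ^ 2)) : ℝ) : ℂ)
        + ((g η * (η / (lam ^ 2 + η ^ 2)) : ℝ) : ℂ) * Complex.I) :=
        integral_congr_ae (Filter.Eventually.of_forall fun η => hpt η)
    _ = (∫ η : ℝ, ((g η * (lam / (lam ^ 2 + η ^ 2)) : ℝ) : ℂ))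
        + (∫ η : ℝ, ((g η * (η / (lam ^ 2 + η ^ 2)) : ℝ) : ℂ) * Complex.I) :=
        integral_add hint1.ofReal (hint2.ofReal.mul_const Complex.I)
    _ = (∫ η : ℝ, ((g η * (lam / (lam ^ 2 + η ^ 2)) : ℝ) : ℂ))
        + (∫ η : ℝ, ((g η * (η / (lam ^ 2 + η ^ 2)) : ℝ) : ℂ)) * Complex.I := by
        rw [integral_mul_const]
    _ = ((∫ η : ℝ, g η * (lam / (lam ^ 2 + η ^ 2)) : ℝ) : ℂ) := by
        rw [hre, him, hodd]; simp

/-- For an even continuous integrable probability density `g`, the boundary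
value of `G` at the origin is `G(0⁺) = π g(0)`, a real number; consequently,
when `g(0) > 0`, `z = 0` solves `G(z) = 2/(Kμ)` exactly when `Kμ = 2/(π g(0))`. -/
theorem G_boundary_value_at_origin
    (g : ℝ → ℝ) (hg_cont : Continuous g) (hg_nonneg : ∀ ω, 0 ≤ g ω)
    (hg_int : Integrable g) (hg_prob : ∫ ω, g ω = 1)
    (hg_even : ∀ η, g (-η) = g η) (hg0 : 0 < g 0) :
    Tendsto (fun lam : ℝ => ∫ η : ℝ, (g η : ℂ) / ((lam : ℂ) - Complex.I * η))
      (nhdsWithin 0 (Ioi 0)) (nhds ((Real.pi * g 0 : ℝ) : ℂ)) ∧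
    (∀ K μ : ℝ, μ ≠ 0 →
      (Real.pi * g 0 = 2 / (K * μ) ↔ K * μ = 2 / (Real.pi * g 0))) := by
  constructor
  · have hreal := poisson_real_tendsto g hg_cont hg_int
    have hcomp : Tendsto (fun lam : ℝ =>
        ((∫ η : ℝ, g η * (lam / (lam ^ 2 + η ^ 2)) : ℝ) : ℂ))
        (nhdsWithin 0 (Ioi 0)) (nhds ((Real.pi * g 0 : ℝ) : ℂ)) :=
      (Complex.continuous_ofReal.tendsto _).comp hreal
    refine hcomp.congr' ?_
    filter_upwards [self_mem_nhdsWithin] with lam hlam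
    exact complex_integral_eq g hg_cont hg_int hg_even lam hlam
  · intro K μ hμ
    have hπ : (0:ℝ) < Real.pi * g 0 := by positivity
    rcases eq_or_ne (K * μ) 0 with h0 | h0
    · rw [h0]
      constructor
      · intro h; rw [div_zero] at h; exact absurd h hπ.ne'
      · intro h; exfalso; have := div_pos two_pos hπ; rw [← h] at this; exact lt_irrefl 0 this
    · rw [eq_div_iff h0, eq_div_iff hπ.ne']
      constructor <;> intro h <;> linear_combination h
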